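/- The number of Dyck paths of length 2n with each k-ascent coloured by a Schroeder path of length 2k equals the number of lattice paths from (0,0) to (3n,0) using steps H=(1,2), G=(2,1), D=(1,-1) that never pass below the x-axis. -/

import Mathlib

open Finset PowerSeries

/-- A Dyck word: list of booleans (`true` = up-step, `false` = down-step),
with equally many up- and down-steps, never going below the x-axis. -/
def IsDyckWord (p : List Bool) : Prop :=
  (∀ k, (p.take k).count false ≤ (p.take k).count true) ∧
    p.count true = p.count false

/-- The lengths of the maximal runs of up-steps (ascents) of a path, in order. -/
def ascentLengths (p : List Bool) : List ℕ :=
  ((p.splitOn false).map List.length).filter (fun k => 0 < k)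

/-- Dyck paths of semilength `n` together with a colour for each ascent,
where a `k`-ascent may receive any colour `c` with `L k c`. -/
def ColouredDyck {α : Type*} (n : ℕ) (L : ℕ → α → Prop) :
    Set (List Bool × List α) :=
  {pc | IsDyckWord pc.1 ∧ pc.1.length = 2 * n ∧
    pc.2.length = (ascentLengths pc.1).length ∧
    ∀ q ∈ (ascentLengths pc.1).zip pc.2, L q.1 q.2}

/-- A Schröder path of length `2n`: steps `U=(1,1)`, `D=(1,-1)`, `L=(2,0)`,
from `(0,0)` to `(2n,0)`, staying weakly above the x-axis. -/
def IsSchroederPath (n : ℕ) (p : List (ℤ × ℤ)) : Prop :=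
  (∀ s ∈ p, s = ((1 : ℤ), (1 : ℤ)) ∨ s = ((1 : ℤ), (-1 : ℤ)) ∨ s = ((2 : ℤ), (0 : ℤ))) ∧
  (p.map Prod.fst).sum = 2 * n ∧
  (p.map Prod.snd).sum = 0 ∧
  ∀ k, 0 ≤ ((p.take k).map Prod.snd).sum

/-- A path from `(0,0)` to `(3n,0)` with steps `H=(1,2)`, `G=(2,1)`,
`D=(1,-1)`, staying weakly above the x-axis. -/
def IsTPath (n : ℕ) (p : List (ℤ × ℤ)) : Prop :=
  (∀ s ∈ p, s = ((1 : ℤ), (2 : ℤ)) ∨ s = ((2 : ℤ), (1 : ℤ)) ∨ s = ((1 : ℤ), (-1 : ℤ))) ∧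
  (p.map Prod.fst).sum = 3 * n ∧
  (p.map Prod.snd).sum = 0 ∧
  ∀ k, 0 ≤ ((p.take k).map Prod.snd).sum

namespace CDS

abbrev Step := ℤ × ℤ

def tr (s : Step) : Step := if s = (1,1) then (1,2) else if s = (2,0) then (2,1) else s
def untr (s : Step) : Step := if s = (1,2) then (1,1) else if s = (2,1) then (2,0) else s

def SSh (s : Step) : Prop := s = (1,1) ∨ s = (1,-1) ∨ s = (2,0)
def TSh (s : Step) : Prop := s = (1,2) ∨ s = (2,1) ∨ s = (1,-1)

/-! ### generic weighted sums and nonnegative prefix sums -/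

def S {α : Type*} (w : α → ℤ) (l : List α) : ℤ := (l.map w).sum

@[simp] lemma S_nil {α} (w : α → ℤ) : S w [] = 0 := rfl
@[simp] lemma S_cons {α} (w : α → ℤ) (s l) : S w (s :: l) = w s + S w l := rfl
@[simp] lemma S_append {α} (w : α → ℤ) (a b) : S w (a ++ b) = S w a + S w b := by
  simp [S]

def NNW {α : Type*} (w : α → ℤ) (h : ℤ) (l : List α) : Prop :=
  ∀ k, 0 ≤ h + S w (l.take k)

lemma NNW_nil {α} (w : α → ℤ) (h) : NNW w h [] ↔ 0 ≤ h := by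
  constructor
  · intro H; simpa using H 0
  · intro H k; simpa using H

lemma NNW_cons {α} (w : α → ℤ) (h s l) : NNW w h (s :: l) ↔ 0 ≤ h ∧ NNW w (h + w s) l := by
  constructor
  · intro H
    refine ⟨by simpa using H 0, fun k => ?_⟩
    have := H (k + 1)
    simpa [add_assoc] using this
  · rintro ⟨h0, H⟩ k
    match k with
    | 0 => simpa using h0
    | k + 1 => have := H k; simpa [add_assoc] using this

lemma NNW_append {α} (w : α → ℤ) (h) (a b : List α) :
    NNW w h (a ++ b) ↔ NNW w h a ∧ NNW w (h + S w a) b := by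
  induction a generalizing h with
  | nil =>
    constructor
    · intro H; exact ⟨(NNW_nil w h).mpr (by simpa using H 0), by simpa using H⟩
    · rintro ⟨_, h2⟩; simpa using h2
  | cons s a ih =>
    simp only [List.cons_append, NNW_cons, ih, and_assoc, S_cons]
    constructor
    · rintro ⟨h0, h1, h2⟩; exact ⟨h0, h1, by rwa [← add_assoc]⟩
    · rintro ⟨h0, h1, h2⟩; exact ⟨h0, h1, by rwa [← add_assoc] at h2⟩

/-! ### specific weights -/

def ys (l : List Step) : ℤ := S Prod.snd l
def xsum (l : List Step) : ℤ := S Prod.fst l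
def wS (s : Step) : ℤ := (untr s).2
def bw (b : Bool) : ℤ := if b then 1 else -1

def tlen (l : List Step) : ℕ := (l.filter (fun s => !(decide (s = ((1:ℤ),(-1:ℤ)))))).length

@[simp] lemma tlen_nil : tlen [] = 0 := rfl
lemma tlen_cons (s l) : tlen (s :: l) = (if s = ((1:ℤ),(-1:ℤ)) then 0 else 1) + tlen l := by
  by_cases h : s = ((1:ℤ),(-1:ℤ)) <;> simp [tlen, h] <;> omega

/-! ### step-level lemmas -/

lemma untr_tr {s : Step} (h : SSh s) : untr (tr s) = s := by
  rcases h with h | h | h <;> subst h <;> decide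

lemma tr_untr {s : Step} (h : TSh s) : tr (untr s) = s := by
  rcases h with h | h | h <;> subst h <;> decide

lemma TSh_tr {s : Step} (h : SSh s) : TSh (tr s) := by
  rcases h with h | h | h <;> subst h <;>
    first
      | exact Or.inl (by decide)
      | exact Or.inr (Or.inl (by decide))
      | exact Or.inr (Or.inr (by decide))

lemma SSh_untr {s : Step} (h : TSh s) : SSh (untr s) := by
  rcases h with h | h | h <;> subst h <;>
    first
      | exact Or.inl (by decide)
      | exact Or.inr (Or.inl (by decide))
      | exact Or.inr (Or.inr (by decide))

lemma tr_eq_D {s : Step} (h : SSh s) : tr s = (1,-1) ↔ s = (1,-1) := by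
  rcases h with h | h | h <;> subst h <;> simp [tr] <;> decide

lemma untr_eq_D {s : Step} (h : TSh s) : untr s = (1,-1) ↔ s = (1,-1) := by
  rcases h with h | h | h <;> subst h <;> simp [untr] <;> decide

lemma tr_snd {s : Step} (h : SSh s) :
    (tr s).2 = s.2 + (if s = ((1:ℤ),(-1:ℤ)) then 0 else 1) := by
  rcases h with h | h | h <;> subst h <;> decide

lemma tr_fst {s : Step} (h : SSh s) : (tr s).1 = s.1 := by
  rcases h with h | h | h <;> subst h <;> decide

lemma untr_snd {s : Step} (h : TSh s) :
    s.2 = (untr s).2 + (if s = ((1:ℤ),(-1:ℤ)) then 0 else 1) := by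
  rcases h with h | h | h <;> subst h <;> decide

lemma untr_fst {s : Step} (h : TSh s) : (untr s).1 = s.1 := by
  rcases h with h | h | h <;> subst h <;> decide

lemma SSh_xy {s : Step} (h : SSh s) :
    s.1 + s.2 = 2 * (if s = ((1:ℤ),(-1:ℤ)) then 0 else 1) := by
  rcases h with h | h | h <;> subst h <;> decide

/-! ### list-level transfer lemmas -/

lemma map_untr_tr {c : List Step} (hc : ∀ s ∈ c, SSh s) : (c.map tr).map untr = c := by
  induction c with
  | nil => rfl
  | cons s c ih =>
    simp only [List.map_cons, List.cons.injEq]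
    exact ⟨untr_tr (hc s (by simp)), ih (fun t ht => hc t (by simp [ht]))⟩

lemma map_tr_untr {b : List Step} (hb : ∀ s ∈ b, TSh s) : (b.map untr).map tr = b := by
  induction b with
  | nil => rfl
  | cons s b ih =>
    simp only [List.map_cons, List.cons.injEq]
    exact ⟨tr_untr (hb s (by simp)), ih (fun t ht => hb t (by simp [ht]))⟩

lemma ys_map_tr {c : List Step} (hc : ∀ s ∈ c, SSh s) :
    ys (c.map tr) = ys c + tlen c := by
  induction c with
  | nil => simp [ys]
  | cons s c ih =>
    have hs := hc s (by simp)
    have := ih (fun t ht => hc t (by simp [ht]))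
    simp only [List.map_cons, ys, S_cons] at *
    rw [tr_snd hs, tlen_cons]
    push_cast
    omega

lemma xs_map_tr {c : List Step} (hc : ∀ s ∈ c, SSh s) : xsum (c.map tr) = xsum c := by
  induction c with
  | nil => rfl
  | cons s c ih =>
    have hs := hc s (by simp)
    have := ih (fun t ht => hc t (by simp [ht]))
    simp only [List.map_cons, xsum, S_cons] at *
    rw [tr_fst hs, this]

lemma tlen_map_tr {c : List Step} (hc : ∀ s ∈ c, SSh s) : tlen (c.map tr) = tlen c := by
  induction c with
  | nil => rfl
  | cons s c ih =>
    have hs := hc s (by simp)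
    have := ih (fun t ht => hc t (by simp [ht]))
    simp only [List.map_cons, tlen_cons, this, tr_eq_D hs]

lemma tlen_map_untr {b : List Step} (hb : ∀ s ∈ b, TSh s) : tlen (b.map untr) = tlen b := by
  induction b with
  | nil => rfl
  | cons s b ih =>
    have hs := hb s (by simp)
    have := ih (fun t ht => hb t (by simp [ht]))
    simp only [List.map_cons, tlen_cons, this, untr_eq_D hs]

lemma xs_map_untr {b : List Step} (hb : ∀ s ∈ b, TSh s) : xsum (b.map untr) = xsum b := by
  induction b with
  | nil => rfl
  | cons s b ih =>
    have hs := hb s (by simp)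
    have := ih (fun t ht => hb t (by simp [ht]))
    simp only [List.map_cons, xsum, S_cons] at *
    rw [untr_fst hs, this]

lemma S_wS (b : List Step) : S wS b = ys (b.map untr) := by
  induction b with
  | nil => rfl
  | cons s b ih => simp [ys, wS, List.map_cons, ih]

lemma ys_wS {b : List Step} (hb : ∀ s ∈ b, TSh s) : ys b = S wS b + tlen b := by
  induction b with
  | nil => simp [ys]
  | cons s b ih =>
    have hs := hb s (by simp)
    have := ih (fun t ht => hb t (by simp [ht]))
    simp only [ys, S_cons, tlen_cons] at *
    rw [this]
    have h2 := untr_snd hs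
    push_cast
    rw [wS]
    omega

lemma xy2 {c : List Step} (hc : ∀ s ∈ c, SSh s) : xsum c + ys c = 2 * tlen c := by
  induction c with
  | nil => simp [xsum, ys]
  | cons s c ih =>
    have hs := hc s (by simp)
    have := ih (fun t ht => hc t (by simp [ht]))
    have h2 := SSh_xy hs
    simp only [xsum, ys, S_cons, tlen_cons] at *
    by_cases hD : s = ((1:ℤ),(-1:ℤ))
    · simp only [if_pos hD] at h2 ⊢; push_cast; omega
    · simp only [if_neg hD] at h2 ⊢; push_cast; omega

lemma tlen_pos {b : List Step} {s : Step} {b' : List Step} (h : b = s :: b')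
    (hs : s ≠ ((1:ℤ),(-1:ℤ))) : 1 ≤ tlen b := by
  subst h; rw [tlen_cons, if_neg hs]; omega

/-! ### the two recursive maps -/

lemma length_dropWhile_le' (p : Bool → Bool) (l : List Bool) :
    (l.dropWhile p).length ≤ l.length := by
  induction l with
  | nil => simp
  | cons a l ih =>
    rw [List.dropWhile_cons]
    split <;> simp <;> omega

def bl : List Step → ℤ → ℕ
  | [], _ => 0
  | s :: q, c => if s = ((1:ℤ),(-1:ℤ)) ∧ c ≤ 0 then 0 else bl q (c + (untr s).2) + 1

@[simp] lemma bl_nil (c) : bl [] c = 0 := rfl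
lemma bl_cons (s q c) : bl (s :: q) c =
    if s = ((1:ℤ),(-1:ℤ)) ∧ c ≤ 0 then 0 else bl q (c + (untr s).2) + 1 := rfl

def Phi : List Bool → List (List Step) → List Step
  | [], _ => []
  | false :: p, cs => ((1:ℤ),(-1:ℤ)) :: Phi p cs
  | true :: _, [] => []
  | true :: p, c :: cs => c.map tr ++ Phi (p.dropWhile (· = true)) cs
termination_by p _ => p.length
decreasing_by
  all_goals (simp_wf <;> first
    | omega
    | (have := length_dropWhile_le' (fun x => x = true) p
       have := length_dropWhile_le' (fun x => x) p
       omega))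

@[simp] lemma Phi_nil (cs) : Phi [] cs = [] := by rw [Phi]
@[simp] lemma Phi_false (p cs) : Phi (false :: p) cs = ((1:ℤ),(-1:ℤ)) :: Phi p cs := by
  rw [Phi]
@[simp] lemma Phi_true (p c cs) :
    Phi (true :: p) (c :: cs) = c.map tr ++ Phi (p.dropWhile (· = true)) cs := by
  rw [Phi]

def Psi : List Step → List Bool × List (List Step)
  | [] => ([], [])
  | s :: q =>
    (List.replicate (tlen ((s :: q).take (bl (s :: q) 0))) true ++
       (if bl (s :: q) 0 < (s :: q).length
          then false :: (Psi (((s :: q).drop (bl (s :: q) 0)).tail)).1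
          else (Psi (((s :: q).drop (bl (s :: q) 0)).tail)).1),
     if bl (s :: q) 0 = 0 then (Psi (((s :: q).drop (bl (s :: q) 0)).tail)).2
       else ((s :: q).take (bl (s :: q) 0)).map untr
              :: (Psi (((s :: q).drop (bl (s :: q) 0)).tail)).2)
termination_by q => q.length
decreasing_by
  all_goals (simp_wf <;> omega)

@[simp] lemma Psi_nil : Psi [] = ([], []) := by rw [Psi]

lemma Psi_eq (q : List Step) (hq : q ≠ []) : Psi q =
    (List.replicate (tlen (q.take (bl q 0))) true ++
       (if bl q 0 < q.length
          then false :: (Psi ((q.drop (bl q 0)).tail)).1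
          else (Psi ((q.drop (bl q 0)).tail)).1),
     if bl q 0 = 0 then (Psi ((q.drop (bl q 0)).tail)).2
       else (q.take (bl q 0)).map untr :: (Psi ((q.drop (bl q 0)).tail)).2) := by
  obtain ⟨s, t, rfl⟩ := List.exists_cons_of_ne_nil hq
  rw [Psi]

/-! ### bl lemmas -/

lemma bl_le (q : List Step) (c : ℤ) : bl q c ≤ q.length := by
  induction q generalizing c with
  | nil => simp
  | cons s q ih =>
    rw [bl_cons]
    split
    · simp
    · simpa using ih (c + (untr s).2)

lemma wS_nonneg_of_not_stop {s : Step} {h : ℤ} (hs : TSh s)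
    (hns : ¬(s = ((1:ℤ),(-1:ℤ)) ∧ h ≤ 0)) (h0 : 0 ≤ h) : 0 ≤ h + wS s := by
  rcases hs with hs | hs | hs <;> subst hs <;> simp [wS, untr] at * <;> omega

lemma bl_map_tr (c : List Step) (r : List Step) (h : ℤ)
    (hc : ∀ s ∈ c, SSh s) (H : ∀ k, 0 ≤ h + ys (c.take k)) :
    bl (c.map tr ++ r) h = c.length + bl r (h + ys c) := by
  induction c generalizing h with
  | nil => simpa [ys] using rfl
  | cons s c ih =>
    have hs := hc s (by simp)
    have hnot : ¬(tr s = ((1:ℤ),(-1:ℤ)) ∧ h ≤ 0) := by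
      rw [tr_eq_D hs]
      rintro ⟨rfl, hh⟩
      have := H 1
      simp [ys] at this
      omega
    rw [List.map_cons, List.cons_append, bl_cons, if_neg hnot, untr_tr hs]
    rw [ih (fun t ht => hc t (by simp [ht])) (h := h + s.2) (fun k => by
      have := H (k + 1); simpa [ys, add_assoc] using this)]
    simp [ys, add_assoc]
    omega

lemma bl_pref (q : List Step) (h : ℤ) (hq : ∀ s ∈ q, TSh s) (h0 : 0 ≤ h) :
    ∀ k ≤ bl q h, 0 ≤ h + S wS (q.take k) := by
  induction q generalizing h with
  | nil => intro k hk; simpa using h0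
  | cons s q ih =>
    intro k hk
    rw [bl_cons] at hk
    by_cases hst : s = ((1:ℤ),(-1:ℤ)) ∧ h ≤ 0
    · rw [if_pos hst] at hk
      interval_cases k
      simpa using h0
    · rw [if_neg hst] at hk
      have hs := hq s (by simp)
      have h1 : 0 ≤ h + wS s := wS_nonneg_of_not_stop hs hst h0
      match k with
      | 0 => simpa using h0
      | k + 1 =>
        have := ih (h + (untr s).2) (fun t ht => hq t (by simp [ht]))
          (by simpa [wS] using h1) k (by omega)
        simpa [add_assoc, wS] using this

lemma bl_stop (q : List Step) (h : ℤ) (hq : ∀ s ∈ q, TSh s) (h0 : 0 ≤ h)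
    (hlt : bl q h < q.length) :
    (q.drop (bl q h)).head? = some ((1:ℤ),(-1:ℤ)) ∧ h + S wS (q.take (bl q h)) = 0 := by
  induction q generalizing h with
  | nil => simp at hlt
  | cons s q ih =>
    by_cases hst : s = ((1:ℤ),(-1:ℤ)) ∧ h ≤ 0
    · rw [bl_cons, if_pos hst]
      refine ⟨by simp [hst.1], by simpa using le_antisymm hst.2 h0 ▸ (by omega : h = 0)⟩
    · have hs := hq s (by simp)
      have h1 : 0 ≤ h + wS s := wS_nonneg_of_not_stop hs hst h0
      rw [bl_cons, if_neg hst] at hlt ⊢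
      have hlt' : bl q (h + (untr s).2) < q.length := by
        simpa using hlt
      have := ih (h + wS s) (fun t ht => hq t (by simp [ht])) h1 (by simpa [wS] using hlt')
      refine ⟨by simpa [wS] using this.1, by
        have h2 := this.2
        simp only [List.take_succ_cons, S_cons]
        rw [show h + (wS s + S wS (List.take (bl q (h + (untr s).2)) q)) =
          h + wS s + S wS (List.take (bl q (h + wS s)) q) by simp [wS]; ring]
        exact h2⟩

lemma bl_lt (q : List Step) (h : ℤ) (hq : ∀ s ∈ q, TSh s) (hNN : NNW Prod.snd h q)
    (hend : h + ys q = 0) (hne : q ≠ []) : bl q 0 < q.length := by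
  have h0 : 0 ≤ h := by simpa using hNN 0
  by_contra hcon
  have hle := bl_le q 0
  have heq : bl q 0 = q.length := by omega
  have hpre := bl_pref q 0 hq le_rfl q.length (by omega)
  rw [List.take_length] at hpre
  obtain ⟨s, q', rfl⟩ := List.exists_cons_of_ne_nil hne
  have hs := hq s (by simp)
  have hsD : s ≠ ((1:ℤ),(-1:ℤ)) := by
    intro hD
    rw [bl_cons, if_pos ⟨hD, le_rfl⟩] at heq
    simp at heq
  have hys := ys_wS hq
  have htl : 1 ≤ tlen (s :: q') := tlen_pos rfl hsD
  simp only [zero_add] at hpre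
  omega

/-! ### ascent lemmas -/

lemma AL_nil : ascentLengths [] = [] := by
  simp [ascentLengths, List.splitOn, List.splitOnP_nil]

lemma AL_false (p : List Bool) : ascentLengths (false :: p) = ascentLengths p := by
  unfold ascentLengths
  rw [show (false :: p).splitOn false = List.splitOnP (· == false) (false :: p) from rfl,
    List.splitOnP_cons]
  simp [List.splitOn]

lemma AL_rep_false (k : ℕ) (p : List Bool) (hk : 0 < k) :
    ascentLengths (List.replicate k true ++ false :: p) = k :: ascentLengths p := by
  unfold ascentLengths
  rw [show (List.replicate k true ++ false :: p).splitOn false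
      = List.splitOnP (· == false) (List.replicate k true ++ false :: p) from rfl,
    List.splitOnP_first (by intro x hx; rw [List.eq_of_mem_replicate hx]; simp) false (by simp)]
  simp [List.splitOn, hk]

lemma AL_rep (k : ℕ) (hk : 0 < k) : ascentLengths (List.replicate k true) = [k] := by
  unfold ascentLengths
  rw [show (List.replicate k true).splitOn false
      = List.splitOnP (· == false) (List.replicate k true) from rfl,
    List.splitOnP_eq_single (by intro x hx; rw [List.eq_of_mem_replicate hx]; simp)]
  simp [hk]

lemma dropWhile_rep_false (j : ℕ) (r : List Bool) :
    List.dropWhile (· = true) (List.replicate j true ++ false :: r) = false :: r := by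
  induction j with
  | zero => simp [List.dropWhile]
  | succ j ih => simpa [List.replicate_succ, List.dropWhile] using ih

lemma dropWhile_rep_nil (j : ℕ) :
    List.dropWhile (· = true) (List.replicate j true) = [] := by
  induction j with
  | zero => simp
  | succ j ih => simpa [List.replicate_succ, List.dropWhile] using ih

lemma bool_cases (p : List Bool) : p = [] ∨ (∃ p', p = false :: p') ∨
    (∃ k, 0 < k ∧ (p = List.replicate k true ∨
      ∃ r, p = List.replicate k true ++ false :: r)) := by
  match p with
  | [] => exact Or.inl rfl
  | false :: p' => exact Or.inr (Or.inl ⟨p', rfl⟩)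
  | true :: p' =>
    refine Or.inr (Or.inr ⟨(p'.takeWhile (· = true)).length + 1, by omega, ?_⟩)
    have hsplit : p' = p'.takeWhile (· = true) ++ p'.dropWhile (· = true) :=
      List.takeWhile_append_dropWhile.symm
    have hrep : p'.takeWhile (· = true) = List.replicate (p'.takeWhile (· = true)).length true := by
      apply List.eq_replicate_of_mem
      intro x hx
      have := List.mem_takeWhile_imp hx
      simpa using this
    rcases hd : p'.dropWhile (· = true) with _ | ⟨b, r⟩
    · left
      rw [List.replicate_succ]
      nth_rewrite 1 [hsplit]
      rw [hd, hrep]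
      simp
    · right
      refine ⟨r, ?_⟩
      have hb : b = false := by
        have := List.head?_dropWhile_not (fun x => decide (x = true)) p'
        rw [hd] at this
        simpa using this
      rw [List.replicate_succ]
      nth_rewrite 1 [hsplit]
      rw [hd, hrep, hb]
      simp

/-! ### Bool-side lemmas -/

lemma S_bw_count (l : List Bool) : S bw l = (l.count true : ℤ) - l.count false := by
  induction l with
  | nil => simp
  | cons b l ih =>
    cases b <;> simp [bw, List.count_cons, ih] <;> push_cast <;> omega

lemma length_count (l : List Bool) : l.length = l.count true + l.count false := by
  induction l with
  | nil => simp
  | cons b l ih =>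
    simp only [List.length_cons, List.count_cons, ih]
    cases b <;> simp <;> omega

lemma S_bw_rep (k : ℕ) : S bw (List.replicate k true) = k := by
  induction k with
  | zero => simp
  | succ k ih => rw [List.replicate_succ]; simp [bw, ih]; omega

lemma NNW_bw_rep (h : ℤ) (k : ℕ) (h0 : 0 ≤ h) : NNW bw h (List.replicate k true) := by
  intro j
  rw [List.take_replicate]
  rw [S_bw_rep]
  have : 0 ≤ (min j k : ℤ) := by positivity
  omega

lemma isDyckWord_iff (p : List Bool) :
    IsDyckWord p ↔ NNW bw 0 p ∧ S bw p = 0 := by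
  constructor
  · rintro ⟨h1, h2⟩
    constructor
    · intro k
      have := h1 k
      rw [S_bw_count]
      omega
    · rw [S_bw_count]; omega
  · rintro ⟨h1, h2⟩
    constructor
    · intro k
      have := h1 k
      rw [S_bw_count] at this
      omega
    · rw [S_bw_count] at h2; omega

/-! ### the structural predicate -/

def Struct (p : List Bool) (cs : List (List Step)) : Prop :=
  cs.length = (ascentLengths p).length ∧
  ∀ pr ∈ (ascentLengths p).zip cs, IsSchroederPath pr.1 pr.2

/-! ### unpacking a Schroeder colour -/

lemma schroeder_facts {k : ℕ} {c : List Step} (h : IsSchroederPath k c) :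
    (∀ s ∈ c, SSh s) ∧ xsum c = 2 * k ∧ ys c = 0 ∧ NNW Prod.snd 0 c ∧ tlen c = k := by
  obtain ⟨h1, h2, h3, h4⟩ := h
  have hsh : ∀ s ∈ c, SSh s := h1
  have hx : xsum c = 2 * k := h2
  have hy : ys c = 0 := h3
  have hn : NNW Prod.snd 0 c := fun j => by simpa [S] using h4 j
  have ht : tlen c = k := by
    have := xy2 hsh
    rw [hx, hy] at this
    omega
  exact ⟨hsh, hx, hy, hn, ht⟩

/-! ### round trip: Psi ∘ Phi = id -/

lemma lemC : ∀ (N : ℕ) (p : List Bool) (cs : List (List Step)), p.length ≤ N →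
    Struct p cs → Psi (Phi p cs) = (p, cs) := by
  intro N
  induction N with
  | zero =>
    intro p cs hlen hS
    have hp : p = [] := List.length_eq_zero_iff.mp (by omega)
    subst hp
    have hcs : cs = [] := List.length_eq_zero_iff.mp (by simpa [AL_nil] using hS.1)
    subst hcs
    simp
  | succ N ih =>
    intro p cs hlen hS
    rcases bool_cases p with rfl | ⟨p', rfl⟩ | ⟨k, hk, hrep⟩
    · have hcs : cs = [] := List.length_eq_zero_iff.mp (by simpa [AL_nil] using hS.1)
      subst hcs
      simp
    · -- down step first
      have hS' : Struct p' cs := by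
        obtain ⟨h1, h2⟩ := hS
        exact ⟨by simpa [AL_false] using h1, by simpa [AL_false] using h2⟩
      rw [Phi_false, Psi_eq _ (by simp)]
      have hbl : bl (((1:ℤ),(-1:ℤ)) :: Phi p' cs) 0 = 0 := by
        rw [bl_cons, if_pos ⟨rfl, le_rfl⟩]
      rw [hbl]
      rw [if_pos (by simp), if_pos rfl]
      simp only [List.take_zero, tlen_nil, List.replicate_zero, List.nil_append,
        List.drop_zero, List.tail_cons]
      rw [ih p' cs (by simp at hlen; omega) hS']
    · obtain ⟨k', rfl⟩ : ∃ k', k = k' + 1 := ⟨k - 1, by omega⟩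
      rcases hrep with rfl | ⟨r, rfl⟩
      · -- p = replicate (k'+1) true, no marker
        have hAL : ascentLengths (List.replicate (k' + 1) true) = [k' + 1] := AL_rep _ hk
        obtain ⟨c, hcs⟩ : ∃ c, cs = [c] := by
          have := hS.1
          rw [hAL] at this
          rcases cs with _ | ⟨c, _ | _⟩ <;> simp_all
        subst hcs
        have hsch : IsSchroederPath (k' + 1) c := by
          have := hS.2 (k' + 1, c)
          rw [hAL] at this
          exact this (by simp)
        obtain ⟨hsh, hx, hy, hn, ht⟩ := schroeder_facts hsch
        have hcne : c ≠ [] := by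
          intro hc; subst hc; simp at ht
        have hPhi : Phi (List.replicate (k' + 1) true) [c] = c.map tr ++ [] := by
          rw [List.replicate_succ, Phi_true, dropWhile_rep_nil, Phi_nil]
        rw [hPhi]
        have hqne : c.map tr ++ [] ≠ [] := by simpa using hcne
        rw [Psi_eq _ hqne]
        have hbl : bl (c.map tr ++ []) 0 = c.length := by
          rw [bl_map_tr c [] 0 hsh (fun j => by simpa [ys] using hn j)]
          simp
        rw [hbl]
        rw [List.take_left' (by simp), List.drop_left' (by simp)]
        rw [if_neg (by simp), if_neg (by simp [hcne])]
        simp only [List.tail_nil, Psi_nil]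
        rw [tlen_map_tr hsh, ht, map_untr_tr hsh]
        simp
      · -- p = replicate (k'+1) true ++ false :: r
        have hAL : ascentLengths (List.replicate (k' + 1) true ++ false :: r)
            = (k' + 1) :: ascentLengths r := AL_rep_false _ _ hk
        obtain ⟨c, cs', hcs⟩ : ∃ c cs', cs = c :: cs' := by
          have := hS.1
          rw [hAL] at this
          rcases cs with _ | ⟨c, cs'⟩
          · simp at this
          · exact ⟨c, cs', rfl⟩
        subst hcs
        have hsch : IsSchroederPath (k' + 1) c := by
          have := hS.2 (k' + 1, c)
          rw [hAL] at this
          exact this (by simp)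
        have hS' : Struct r cs' := by
          obtain ⟨h1, h2⟩ := hS
          rw [hAL] at h1 h2
          refine ⟨by simpa using h1, fun pr hpr => h2 pr (by simp [hpr])⟩
        obtain ⟨hsh, hx, hy, hn, ht⟩ := schroeder_facts hsch
        have hcne : c ≠ [] := by
          intro hc; subst hc; simp at ht
        have hPhi : Phi (List.replicate (k' + 1) true ++ false :: r) (c :: cs')
            = c.map tr ++ (((1:ℤ),(-1:ℤ)) :: Phi r cs') := by
          rw [List.replicate_succ, List.cons_append, Phi_true, dropWhile_rep_false, Phi_false]
        rw [hPhi]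
        have hqne : c.map tr ++ (((1:ℤ),(-1:ℤ)) :: Phi r cs') ≠ [] := by simp
        rw [Psi_eq _ hqne]
        have hbl : bl (c.map tr ++ (((1:ℤ),(-1:ℤ)) :: Phi r cs')) 0 = c.length := by
          rw [bl_map_tr c _ 0 hsh (fun j => by simpa [ys] using hn j)]
          rw [bl_cons]
          rw [if_pos ⟨rfl, by omega⟩]
          simp
        rw [hbl]
        rw [List.take_left' (by simp), List.drop_left' (by simp)]
        rw [if_pos (by simp), if_neg (by simp [hcne])]
        simp only [List.tail_cons]
        have hlen' : r.length ≤ N := by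
          rw [List.length_append, List.length_replicate] at hlen
          simp at hlen
          omega
        rw [ih r cs' hlen' hS']
        rw [tlen_map_tr hsh, ht, map_untr_tr hsh]

/-! ### Phi produces T-paths -/

lemma lemB : ∀ (N : ℕ) (p : List Bool) (cs : List (List Step)) (h : ℤ), p.length ≤ N →
    Struct p cs → NNW bw h p → h + S bw p = 0 →
    (∀ s ∈ Phi p cs, TSh s) ∧ NNW Prod.snd h (Phi p cs) ∧ h + ys (Phi p cs) = 0 ∧
      xsum (Phi p cs) = 2 * (p.count true : ℤ) + (p.count false : ℤ) := by
  intro N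
  induction N with
  | zero =>
    intro p cs h hlen hS hNN hT
    have hp : p = [] := List.length_eq_zero_iff.mp (by omega)
    subst hp
    simp only [Phi_nil]
    have h0 : h = 0 := by simpa using hT
    subst h0
    refine ⟨by simp, by simp [NNW_nil], by simp [ys], by simp [xsum]⟩
  | succ N ih =>
    intro p cs h hlen hS hNN hT
    rcases bool_cases p with rfl | ⟨p', rfl⟩ | ⟨k, hk, hrep⟩
    · simp only [Phi_nil]
      have h0 : h = 0 := by simpa using hT
      subst h0
      refine ⟨by simp, by simp [NNW_nil], by simp [ys], by simp [xsum]⟩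
    · -- down step
      have hS' : Struct p' cs := by
        obtain ⟨h1, h2⟩ := hS
        exact ⟨by simpa [AL_false] using h1, by simpa [AL_false] using h2⟩
      rw [NNW_cons] at hNN
      obtain ⟨h0, hNN'⟩ := hNN
      have hbwf : bw false = -1 := rfl
      rw [hbwf] at hNN'
      have hT' : (h + -1) + S bw p' = 0 := by
        rw [S_cons, hbwf] at hT
        omega
      obtain ⟨ih1, ih2, ih3, ih4⟩ := ih p' cs (h + -1) (by simp at hlen; omega) hS' hNN' hT'
      rw [Phi_false]
      refine ⟨?_, ?_, ?_, ?_⟩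
      · intro s hs
        rcases List.mem_cons.mp hs with rfl | hs
        · exact Or.inr (Or.inr rfl)
        · exact ih1 s hs
      · rw [NNW_cons]
        exact ⟨h0, by simpa using ih2⟩
      · simp only [ys, S_cons] at ih3 ⊢
        omega
      · simp only [xsum, S_cons] at ih4 ⊢
        simp [List.count_cons]
        push_cast
        omega
    · obtain ⟨k', rfl⟩ : ∃ k', k = k' + 1 := ⟨k - 1, by omega⟩
      rcases hrep with rfl | ⟨r, rfl⟩
      · -- p = replicate (k'+1) true : impossible since h + (k'+1) = 0 and h ≥ 0
        exfalso
        have h0 : 0 ≤ h := by simpa using hNN 0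
        rw [S_bw_rep] at hT
        push_cast at hT
        omega
      · have hAL : ascentLengths (List.replicate (k' + 1) true ++ false :: r)
            = (k' + 1) :: ascentLengths r := AL_rep_false _ _ hk
        obtain ⟨c, cs', hcs⟩ : ∃ c cs', cs = c :: cs' := by
          have := hS.1
          rw [hAL] at this
          rcases cs with _ | ⟨c, cs'⟩
          · simp at this
          · exact ⟨c, cs', rfl⟩
        subst hcs
        have hsch : IsSchroederPath (k' + 1) c := by
          have := hS.2 (k' + 1, c)
          rw [hAL] at this
          exact this (by simp)
        have hS' : Struct r cs' := by
          obtain ⟨h1, h2⟩ := hS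
          rw [hAL] at h1 h2
          refine ⟨by simpa using h1, fun pr hpr => h2 pr (by simp [hpr])⟩
        obtain ⟨hsh, hx, hy, hn, ht⟩ := schroeder_facts hsch
        have h0 : 0 ≤ h := by simpa using hNN 0
        -- decompose the Dyck conditions
        rw [NNW_append] at hNN
        obtain ⟨_, hNN2⟩ := hNN
        rw [S_bw_rep] at hNN2
        rw [NNW_cons] at hNN2
        obtain ⟨_, hNN3⟩ := hNN2
        have hbwf : bw false = -1 := rfl
        rw [hbwf] at hNN3
        set h' : ℤ := h + (k' + 1) + -1 with hh'
        have hT' : h' + S bw r = 0 := by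
          rw [S_append, S_bw_rep, S_cons, hbwf] at hT
          push_cast at hT ⊢
          omega
        have hlen' : r.length ≤ N := by
          rw [List.length_append, List.length_replicate] at hlen
          simp at hlen
          omega
        obtain ⟨ih1, ih2, ih3, ih4⟩ := ih r cs' h' hlen' hS' hNN3 hT'
        have hPhi : Phi (List.replicate (k' + 1) true ++ false :: r) (c :: cs')
            = c.map tr ++ (((1:ℤ),(-1:ℤ)) :: Phi r cs') := by
          rw [List.replicate_succ, List.cons_append, Phi_true, dropWhile_rep_false, Phi_false]
        rw [hPhi]
        have hystr : ys (c.map tr) = k' + 1 := by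
          rw [ys_map_tr hsh, hy, ht]
          push_cast
          omega
        refine ⟨?_, ?_, ?_, ?_⟩
        · intro s hs
          rw [List.mem_append] at hs
          rcases hs with hs | hs
          · obtain ⟨t, htc, rfl⟩ := List.mem_map.mp hs
            exact TSh_tr (hsh t htc)
          · rcases List.mem_cons.mp hs with rfl | hs
            · exact Or.inr (Or.inr rfl)
            · exact ih1 s hs
        · rw [NNW_append]
          constructor
          · intro j
            rw [← List.map_take]
            have hsub : ∀ s ∈ c.take j, SSh s := fun s hs => hsh s (List.take_subset j c hs)
            rw [show S Prod.snd ((c.take j).map tr) = ys ((c.take j).map tr) from rfl,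
              ys_map_tr hsub]
            have := hn j
            simp only [zero_add] at this
            have htl : (0:ℤ) ≤ tlen (c.take j) := by positivity
            rw [show S Prod.snd (c.take j) = ys (c.take j) from rfl] at this
            omega
          · rw [show S Prod.snd (c.map tr) = ys (c.map tr) from rfl, hystr]
            rw [NNW_cons]
            refine ⟨by omega, by simpa using ih2⟩
        · simp only [ys, S_append, S_cons] at ih3 ⊢
          rw [show S Prod.snd (c.map tr) = ys (c.map tr) from rfl, hystr]
          omega
        · rw [show xsum (c.map tr ++ (((1:ℤ),(-1:ℤ)) :: Phi r cs'))
              = xsum (c.map tr) + (1 + xsum (Phi r cs')) from by simp [xsum]]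
          rw [xs_map_tr hsh, hx]
          simp [List.count_append, List.count_cons, List.count_replicate]
          simp only [xsum] at ih4 ⊢
          push_cast
          omega

/-! ### Psi is the inverse on T-paths -/

lemma lemA : ∀ (N : ℕ) (q : List Step) (h : ℤ), q.length ≤ N → (∀ s ∈ q, TSh s) →
    NNW Prod.snd h q → h + ys q = 0 →
    Struct (Psi q).1 (Psi q).2 ∧ NNW bw h (Psi q).1 ∧ h + S bw (Psi q).1 = 0 ∧
    Phi (Psi q).1 (Psi q).2 = q ∧
    2 * ((Psi q).1.count true : ℤ) + ((Psi q).1.count false : ℤ) = xsum q := by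
  intro N
  induction N with
  | zero =>
    intro q h hlen hq hNN hT
    have hq0 : q = [] := List.length_eq_zero_iff.mp (by omega)
    subst hq0
    have h0 : h = 0 := by simpa [ys] using hT
    subst h0
    refine ⟨⟨by simp [AL_nil], by simp [AL_nil]⟩, by simp [NNW_nil], by simp, by simp, by simp [xsum]⟩
  | succ N ih =>
    intro q h hlen hq hNN hT
    rcases heq : q with _ | ⟨s1, q'⟩
    · subst heq
      have h0 : h = 0 := by simpa [ys] using hT
      subst h0
      refine ⟨⟨by simp [AL_nil], by simp [AL_nil]⟩, by simp [NNW_nil], by simp, by simp, by simp [xsum]⟩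
    · subst heq
      have h0 : 0 ≤ h := by simpa using hNN 0
      have hne : s1 :: q' ≠ [] := by simp
      have hm : bl (s1 :: q') 0 < (s1 :: q').length := bl_lt _ h hq hNN hT hne
      set m := bl (s1 :: q') 0 with hmdef
      set b := (s1 :: q').take m with hbdef
      have hstop := bl_stop (s1 :: q') 0 hq le_rfl hm
      rcases hdrop : (s1 :: q').drop m with _ | ⟨s0, rest⟩
      · rw [hdrop] at hstop; simp at hstop
      · have hs0 : s0 = ((1:ℤ),(-1:ℤ)) := by
          have := hstop.1
          rw [hdrop] at this
          simpa using this
        subst hs0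
        have hq_decomp : s1 :: q' = b ++ (((1:ℤ),(-1:ℤ)) :: rest) := by
          rw [hbdef, ← hdrop, List.take_append_drop]
        have hlenb : b.length = m := by
          rw [hbdef, List.length_take]
          omega
        have hqb : ∀ s ∈ b, TSh s := fun s hs => hq s (List.take_subset m _ hs)
        have hqrest : ∀ s ∈ rest, TSh s := fun s hs => hq s (by
          rw [hq_decomp]; simp [hs])
        have hySb : S wS b = 0 := by simpa using hstop.2
        have hysc : ys (b.map untr) = 0 := by rw [← S_wS]; exact hySb
        have htlen : tlen (b.map untr) = tlen b := tlen_map_untr hqb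
        have hysb : ys b = tlen b := by
          rw [ys_wS hqb, hySb]; simp
        have hNNc : NNW Prod.snd 0 (b.map untr) := by
          intro j
          rcases le_or_gt j m with hj | hj
          · have hbj : b.take j = (s1 :: q').take j := by
              rw [hbdef, List.take_take, min_eq_left hj]
            rw [← List.map_take, hbj]
            have := bl_pref (s1 :: q') 0 hq le_rfl j hj
            rw [S_wS] at this
            simpa [ys] using this
          · rw [List.take_of_length_le (by rw [List.length_map, hlenb]; omega)]
            rw [show S Prod.snd (List.map untr b) = ys (List.map untr b) from rfl, hysc]
            simp
        -- conditions for rest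
        have hNN2 : NNW Prod.snd (h + ys b + -1) rest := by
          rw [hq_decomp, NNW_append, NNW_cons] at hNN
          have := hNN.2.2
          simpa [ys] using this
        have hT2 : (h + ys b + -1) + ys rest = 0 := by
          rw [hq_decomp] at hT
          simp only [ys, S_append, S_cons] at hT ⊢
          omega
        have hlen2 : rest.length ≤ N := by
          have hql : (s1 :: q').length = b.length + 1 + rest.length := by
            rw [hq_decomp]; simp; omega
          simp only [List.length_cons] at hql hlen
          omega
        obtain ⟨ihS, ihN, ihT, ihPhi, ihX⟩ := ih rest (h + ys b + -1) hlen2 hqrest hNN2 hT2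
        have hxq : xsum (s1 :: q') = xsum b + 1 + xsum rest := by
          rw [hq_decomp]
          simp [xsum]
          ring
        rcases Nat.eq_zero_or_pos m with hm0 | hmpos
        · -- m = 0 : a Dyck down-step
          have hb0 : b = [] := by rw [hbdef, hm0]; simp
          have hrest_eq : ((s1 :: q').drop m).tail = rest := by
            rw [hdrop, List.tail_cons]
          have hPsi : Psi (s1 :: q') = (false :: (Psi rest).1, (Psi rest).2) := by
            rw [Psi_eq _ hne, ← hmdef, ← hbdef, hrest_eq]
            rw [if_pos hm, if_pos hm0, hb0]
            simp
          rw [hPsi]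
          have hysb0 : ys b = 0 := by rw [hb0]; simp [ys]
          refine ⟨?_, ?_, ?_, ?_, ?_⟩
          · exact ⟨by simpa [AL_false] using ihS.1, by
              intro pr hpr
              exact ihS.2 pr (by simpa [AL_false] using hpr)⟩
          · rw [NNW_cons]
            refine ⟨h0, ?_⟩
            have : bw false = -1 := rfl
            rw [this]
            rw [hysb0] at ihN
            convert ihN using 2
            omega
          · rw [S_cons]
            rw [hysb0] at ihT
            have : bw false = -1 := rfl
            rw [this]
            omega
          · rw [Phi_false, ihPhi, hq_decomp, hb0]
            simp
          · rw [hxq, hb0]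
            simp only [List.count_cons, xsum, S_nil]
            simp only [xsum] at ihX
            simp
            push_cast
            omega
        · -- m ≥ 1 : an ascent block
          have hs1 : s1 ≠ ((1:ℤ),(-1:ℤ)) := by
            intro hD
            have : m = 0 := by rw [hmdef, bl_cons, if_pos ⟨hD, le_rfl⟩]
            omega
          have hbcons : b = s1 :: q'.take (m - 1) := by
            obtain ⟨m', hm'⟩ := Nat.exists_eq_add_of_le hmpos
            rw [hbdef, hm', Nat.add_comm 1 m', List.take_succ_cons]
            simp
          set k := tlen b with hkdef
          have hkpos : 1 ≤ k := tlen_pos hbcons hs1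
          have hrest_eq : ((s1 :: q').drop m).tail = rest := by
            rw [hdrop, List.tail_cons]
          have hPsi : Psi (s1 :: q') =
              (List.replicate k true ++ false :: (Psi rest).1,
               b.map untr :: (Psi rest).2) := by
            rw [Psi_eq _ hne, ← hmdef, ← hbdef, hrest_eq]
            rw [if_pos hm, if_neg (by omega)]
          rw [hPsi]
          have hAL : ascentLengths (List.replicate k true ++ false :: (Psi rest).1)
              = k :: ascentLengths (Psi rest).1 := AL_rep_false _ _ (by omega)
          have hcsh : ∀ s ∈ b.map untr, SSh s := by
            intro s hs
            obtain ⟨t, htb, rfl⟩ := List.mem_map.mp hs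
            exact SSh_untr (hqb t htb)
          have hxc : xsum (b.map untr) = 2 * k := by
            have := xy2 hcsh
            rw [hysc, htlen] at this
            omega
          refine ⟨?_, ?_, ?_, ?_, ?_⟩
          · constructor
            · rw [hAL]
              simp [ihS.1]
            · intro pr hpr
              rw [hAL] at hpr
              rcases List.mem_cons.mp (by simpa using hpr) with hpr' | hpr'
              · rw [hpr']
                refine ⟨hcsh, by exact hxc, by exact hysc, fun j => by simpa [S] using hNNc j⟩
              · exact ihS.2 pr hpr'
          · rw [NNW_append]
            refine ⟨NNW_bw_rep h k h0, ?_⟩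
            rw [S_bw_rep, NNW_cons]
            refine ⟨by omega, ?_⟩
            have : bw false = -1 := rfl
            rw [this]
            rw [hysb] at ihN
            exact ihN
          · rw [S_append, S_bw_rep, S_cons]
            rw [hysb] at ihT
            have : bw false = -1 := rfl
            rw [this]
            omega
          · obtain ⟨k', hk'⟩ : ∃ k', k = k' + 1 := ⟨k - 1, by omega⟩
            rw [hk', List.replicate_succ, List.cons_append, Phi_true,
              dropWhile_rep_false, Phi_false, ihPhi, map_tr_untr hqb, hq_decomp]
          · rw [hxq]
            have hxb : xsum b = 2 * k := by
              rw [← xs_map_untr hqb]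
              exact hxc
            rw [hxb]
            simp only [List.count_append, List.count_cons, List.count_replicate]
            simp only [xsum] at ihX ⊢
            simp
            push_cast
            omega

/-! ### assembling the bijection -/

def theEquiv (n : ℕ) :
    (ColouredDyck n (fun k c => IsSchroederPath k c)) ≃ {p : List (ℤ × ℤ) // IsTPath n p} where
  toFun x := by
    refine ⟨Phi x.1.1 x.1.2, ?_⟩
    obtain ⟨⟨p, cs⟩, hDy, hlen, h1, h2⟩ := x
    obtain ⟨hNN, hTot⟩ := (isDyckWord_iff p).mp hDy
    obtain ⟨sh, nn, tot, hxs⟩ := lemB p.length p cs 0 le_rfl ⟨h1, h2⟩ hNN (by simpa using hTot)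
    have hcteq : p.count true = p.count false := hDy.2
    have hlc := length_count p
    have hlen' : p.length = 2 * n := hlen
    have hct : p.count true = n := by omega
    have hcf : p.count false = n := by omega
    refine ⟨?_, ?_, ?_, ?_⟩
    · intro s hs
      rcases sh s hs with h | h | h
      · exact Or.inl h
      · exact Or.inr (Or.inl h)
      · exact Or.inr (Or.inr h)
    · show xsum (Phi p cs) = 3 * (n : ℤ)
      rw [hxs, hct, hcf]
      push_cast
      ring
    · show ys (Phi p cs) = 0
      omega
    · intro k
      have := nn k
      simpa [S] using this
  invFun y := by
    refine ⟨Psi y.1, ?_⟩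
    obtain ⟨q, sh, hx, hy, hpre⟩ := y
    have sh' : ∀ s ∈ q, TSh s := by
      intro s hs
      rcases sh s hs with h | h | h
      · exact Or.inl h
      · exact Or.inr (Or.inl h)
      · exact Or.inr (Or.inr h)
    obtain ⟨St, nn, tot, phiq, cnt⟩ := lemA q.length q 0 le_rfl sh'
      (fun k => by simpa [S] using hpre k) (by simpa [ys, S] using hy)
    have hxq : xsum q = 3 * (n : ℤ) := hx
    rw [hxq] at cnt
    have hDy : IsDyckWord (Psi q).1 := (isDyckWord_iff _).mpr ⟨nn, by simpa using tot⟩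
    have hcteq : (Psi q).1.count true = (Psi q).1.count false := hDy.2
    have hlc := length_count (Psi q).1
    refine ⟨hDy, ?_, St.1, St.2⟩
    show (Psi q).1.length = 2 * n
    omega
  left_inv x := by
    apply Subtype.ext
    obtain ⟨⟨p, cs⟩, hDy, hlen, h1, h2⟩ := x
    exact lemC p.length p cs le_rfl ⟨h1, h2⟩
  right_inv y := by
    apply Subtype.ext
    obtain ⟨q, sh, hx, hy, hpre⟩ := y
    have sh' : ∀ s ∈ q, TSh s := by
      intro s hs
      rcases sh s hs with h | h | h
      · exact Or.inl h
      · exact Or.inr (Or.inl h)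
      · exact Or.inr (Or.inr h)
    obtain ⟨St, nn, tot, phiq, cnt⟩ := lemA q.length q 0 le_rfl sh'
      (fun k => by simpa [S] using hpre k) (by simpa [ys, S] using hy)
    exact phiq

end CDS

/-- Dyck paths of length `2n` with each `k`-ascent coloured by a
Schröder path of length `2k` are equinumerous with lattice paths from `(0,0)`
to `(3n,0)` with steps `(1,2)`, `(2,1)`, `(1,-1)` staying weakly above the
x-axis. -/
theorem coloured_dyck_schroeder_eq_tpaths (n : ℕ) :
    Nat.card (ColouredDyck n (fun k c => IsSchroederPath k c)) =
      Nat.card {p : List (ℤ × ℤ) // IsTPath n p} :=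
  Nat.card_congr (CDS.theEquiv n)
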